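/- There is a universal constant C such that for every finite metric space (M, d) with |M| ≥ 3, one has γ₁(M, d) ≤ [γ₂(M, √d)]² ≤ C · log(log|M|) · γ₁(M, d), where √d denotes the metric (x,y) ↦ √(d(x,y)). -/

import Mathlib

open MeasureTheory ENNReal NNReal

namespace CoverTime

noncomputable section

/-- A (time-homogeneous) Markov chain on a state space `M`, described by the family of
laws `P x` of the trajectory `(X_n)_{n ≥ 0}` started at `x`, on the path space `ℕ → M`,
together with its transition kernel `K`. -/
structure Chain (M : Type*) [MeasurableSpace M] where
  P : M → Measure (ℕ → M)
  prob : ∀ x, IsProbabilityMeasure (P x)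
  K : M → M → ℝ≥0∞
  K_row : ∀ x, ∑' y, K x y = 1
  start : ∀ x, P x {ω | ω 0 = x} = 1
  markov : ∀ (x : M) (path : ℕ → M) (n : ℕ),
    P x {ω | ∀ i ≤ n + 1, ω i = path i}
      = P x {ω | ∀ i ≤ n, ω i = path i} * K (path n) (path (n + 1))

variable {M : Type*}

/-- Hitting time `T(A) = inf {n ≥ 0 : X_n ∈ A}` of a set `A`, with value `∞` if `A` is
never hit. -/
def hitTime (A : Set M) (ω : ℕ → M) : ℝ≥0∞ :=
  ⨅ n ∈ {n : ℕ | ω n ∈ A}, (n : ℝ≥0∞)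

/-- The `k`-th return time `T^k(x)`: `T^0(x) = 0` and
`T^k(x) = inf {n ≥ T^{k-1}(x) + 1 : X_n = x}`. -/
def retTime (x : M) : ℕ → (ℕ → M) → ℝ≥0∞
  | 0 => fun _ => 0
  | k + 1 => fun ω => ⨅ n ∈ {n : ℕ | retTime x k ω < (n : ℝ≥0∞) ∧ ω n = x}, (n : ℝ≥0∞)

/-- Number of visits to `y` (strictly) before time `t`, i.e. `N_t(y)`. -/
def visits (y : M) (t : ℝ≥0∞) (ω : ℕ → M) : ℝ≥0∞ :=
  ∑' n : ℕ, Set.indicator {n : ℕ | (n : ℝ≥0∞) < t ∧ ω n = y} (fun _ => (1 : ℝ≥0∞)) n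

variable [MeasurableSpace M]

/-- Expectation `E_x f` of a nonnegative path functional under `P_x`. -/
def E (c : Chain M) (x : M) (f : (ℕ → M) → ℝ≥0∞) : ℝ≥0∞ :=
  ∫⁻ ω, f ω ∂(c.P x)

/-- The expected hitting time `E_x T(y)`. -/
def eHit (c : Chain M) (x y : M) : ℝ≥0∞ := E c x (hitTime {y})

/-- The commute distance `d(x,y) = E_x T(y) + E_y T(x)`. -/
def commuteDist (c : Chain M) (x y : M) : ℝ≥0∞ := eHit c x y + eHit c y x

/-- `T_cov(A) = sup_{x ∈ A} T(x)`, the first time every point of `A` has been visited. -/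
def coverTime (A : Set M) (ω : ℕ → M) : ℝ≥0∞ := ⨆ x ∈ A, hitTime {x} ω

/-- The cover time `cov(A) = sup_{x ∈ A} E_x T_cov(A)`. -/
def cov (c : Chain M) (A : Set M) : ℝ≥0∞ := ⨆ x ∈ A, E c x (coverTime A)

/-- `cov_-(A) = min_{x ∈ A} E_x T_cov(A)`. -/
def covMinus (c : Chain M) (A : Set M) : ℝ≥0∞ := ⨅ x ∈ A, E c x (coverTime A)

/-- Irreducibility of the chain. -/
def Irreducible (c : Chain M) : Prop := ∀ x y : M, ∃ n : ℕ, 0 < c.P x {ω | ω n = y}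

/-- Positive recurrence: every state has finite expected return time. -/
def PositiveRecurrent (c : Chain M) : Prop := ∀ x : M, E c x (retTime x 1) < ∞

/-- `π` is an invariant probability measure for the chain. -/
def Invariant (c : Chain M) (π : M → ℝ≥0∞) : Prop :=
  (∑' x, π x = 1) ∧ ∀ y, ∑' x, π x * c.K x y = π y

/-- Reversibility with respect to `π`: `π(x) P(x,y) = π(y) P(y,x)`. -/
def Reversible (c : Chain M) (π : M → ℝ≥0∞) : Prop :=
  ∀ x y, π x * c.K x y = π y * c.K y x

/-- Diameter of a set with respect to an `ℝ≥0∞`-valued distance. -/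
def setDiam (d : M → M → ℝ≥0∞) (B : Set M) : ℝ≥0∞ := ⨆ x ∈ B, ⨆ y ∈ B, d x y

/-- The sequence `N_0 = 1`, `N_n = 2^(2^n)` for `n ≥ 1`. -/
def Nseq : ℕ → ℕ
  | 0 => 1
  | n + 1 => 2 ^ 2 ^ (n + 1)

/-- An admissible sequence of partitions of `A`: `𝒜_{n+1}` refines `𝒜_n` and
`|𝒜_n| ≤ N_n` for every `n`.  The partition `𝒜_n` is encoded by the map
`cell n` sending `x ∈ A` to the element `A_n(x)` of `𝒜_n` containing it. -/
structure AdmissibleSeq {M : Type*} (A : Set M) where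
  cell : ℕ → M → Set M
  self_mem : ∀ n, ∀ x ∈ A, x ∈ cell n x
  cell_subset : ∀ n, ∀ x ∈ A, cell n x ⊆ A
  compatible : ∀ n, ∀ x ∈ A, ∀ y ∈ A, cell n x = cell n y ∨ Disjoint (cell n x) (cell n y)
  refines : ∀ n, ∀ x ∈ A, cell (n + 1) x ⊆ cell n x
  finite : ∀ n, {B : Set M | ∃ x ∈ A, B = cell n x}.Finite
  card_le : ∀ n, {B : Set M | ∃ x ∈ A, B = cell n x}.ncard ≤ Nseq n

/-- Talagrand's functional `γ₂(A, d) = inf sup_x Σ_n 2^{n/2} Δ(A_n(x), d)`, the infimum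
running over admissible sequences of partitions of `A`. -/
def gamma2 {M : Type*} (d : M → M → ℝ≥0∞) (A : Set M) : ℝ≥0∞ :=
  ⨅ 𝒜 : AdmissibleSeq A, ⨆ x ∈ A,
    ∑' n : ℕ, (2 : ℝ≥0∞) ^ ((n : ℝ) / 2) * setDiam d (𝒜.cell n x)

/-- Talagrand's functional `γ₁(A, d) = inf sup_x Σ_n 2^n Δ(A_n(x), d)`. -/
def gamma1 {M : Type*} (d : M → M → ℝ≥0∞) (A : Set M) : ℝ≥0∞ :=
  ⨅ 𝒜 : AdmissibleSeq A, ⨆ x ∈ A,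
    ∑' n : ℕ, (2 : ℝ≥0∞) ^ n * setDiam d (𝒜.cell n x)

/-- Talagrand's growth condition for a set functional `F`, with parameters `r` and `τ`. -/
def GrowthCondition {M : Type*} (d : M → M → ℝ≥0∞) (F : Set M → ℝ≥0∞)
    (r : ℝ≥0∞) (τ : ℕ) : Prop :=
  ∀ (n : ℕ) (a : ℝ≥0∞), 0 < a →
    ∀ H : Fin (Nseq (n + τ)) → Set M,
      (∀ i, (H i).Nonempty) →
      setDiam d (⋃ i, H i) ≤ r * a →
      (∀ i j, i ≠ j → ∀ x ∈ H i, ∀ y ∈ H j, a ≤ d x y) →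
      (∀ i, setDiam d (H i) ≤ a / r) →
      a * 2 ^ n + ⨅ i, F (H i) ≤ F (⋃ i, H i)



/-! ### Auxiliary lemmas for Statement 19 -/

section Statement19Aux

lemma sqIso_apply' (x : ℝ≥0∞) : ENNReal.orderIsoRpow 2 (by norm_num) x = x ^ 2 := by
  show x ^ (2:ℝ) = x ^ 2
  rw [← ENNReal.rpow_natCast x 2]
  norm_num

lemma sq_iSup' {ι : Sort*} (f : ι → ℝ≥0∞) : (⨆ i, f i) ^ 2 = ⨆ i, f i ^ 2 := by
  rw [← sqIso_apply', OrderIso.map_iSup]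
  simp only [sqIso_apply']

lemma sq_iInf' {ι : Sort*} (f : ι → ℝ≥0∞) : (⨅ i, f i) ^ 2 = ⨅ i, f i ^ 2 := by
  rw [← sqIso_apply', OrderIso.map_iInf]
  simp only [sqIso_apply']

lemma tsum_sq_le_sq_tsum' (f : ℕ → ℝ≥0∞) : ∑' n, f n ^ 2 ≤ (∑' n, f n) ^ 2 := by
  calc ∑' n, f n ^ 2 ≤ ∑' n, f n * (∑' k, f k) := by
        refine ENNReal.tsum_le_tsum fun n => ?_
        rw [pow_two]
        exact mul_le_mul_right (ENNReal.le_tsum n) _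
    _ = (∑' n, f n) ^ 2 := by rw [ENNReal.tsum_mul_right, pow_two]

lemma sq_sum_le' {ι : Type*} (s : Finset ι) (f : ι → ℝ≥0∞) :
    (∑ i ∈ s, f i) ^ 2 ≤ 2 * s.card * ∑ i ∈ s, f i ^ 2 := by
  have key : ∀ a b : ℝ≥0∞, a * b ≤ a ^ 2 + b ^ 2 := by
    intro a b
    rcases le_total a b with h | h
    · calc a * b ≤ b * b := mul_le_mul_left h _
        _ = b ^ 2 := (pow_two b).symm
        _ ≤ a ^ 2 + b ^ 2 := le_add_self
    · calc a * b ≤ a * a := mul_le_mul_right h _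
        _ = a ^ 2 := (pow_two a).symm
        _ ≤ a ^ 2 + b ^ 2 := le_self_add
  calc (∑ i ∈ s, f i) ^ 2 = ∑ i ∈ s, ∑ j ∈ s, f i * f j := by
        rw [pow_two, Finset.sum_mul_sum]
    _ ≤ ∑ i ∈ s, ∑ j ∈ s, (f i ^ 2 + f j ^ 2) :=
        Finset.sum_le_sum fun i _ => Finset.sum_le_sum fun j _ => key _ _
    _ = 2 * s.card * ∑ i ∈ s, f i ^ 2 := by
        simp only [Finset.sum_add_distrib, Finset.sum_const, nsmul_eq_mul]
        rw [← Finset.mul_sum]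
        ring

lemma log_two_ge' : (1/2 : ℝ) ≤ Real.log 2 := by
  have := Real.one_sub_inv_le_log_of_pos (by norm_num : (0:ℝ) < 2)
  norm_num at this; linarith

lemma log_three_ge' : (1.09 : ℝ) ≤ Real.log 3 := by
  have h1 : Real.log 3 = Real.log (Real.exp 1 * (3 / Real.exp 1)) := by
    rw [mul_div_cancel₀]; positivity
  have hexp : Real.exp 1 < 2.7182818286 := Real.exp_one_lt_d9
  have hpos : (0:ℝ) < 3 / Real.exp 1 := by positivity
  have h2 := Real.one_sub_inv_le_log_of_pos hpos
  rw [h1, Real.log_mul (by positivity) (by positivity), Real.log_exp] at *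
  have hinv : (3 / Real.exp 1)⁻¹ = Real.exp 1 / 3 := by rw [inv_div]
  rw [hinv] at h2
  nlinarith [Real.exp_pos 1]

lemma loglog_three_ge' : (0.08 : ℝ) ≤ Real.log (Real.log 3) := by
  have h := log_three_ge'
  have h2 := Real.one_sub_inv_le_log_of_pos (by linarith : (0:ℝ) < Real.log 3)
  have h3 : (Real.log 3)⁻¹ ≤ (1.09:ℝ)⁻¹ := by
    apply inv_anti₀ <;> linarith
  have h4 : 1 - (1.09:ℝ)⁻¹ ≤ 1 - (Real.log 3)⁻¹ := by linarith
  norm_num at h4 ⊢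
  linarith

lemma numeric_m_bound' (N : ℕ) (hN : 3 ≤ N) :
    1 ≤ Nat.clog 2 (Nat.clog 2 N) ∧ N ≤ 2 ^ 2 ^ Nat.clog 2 (Nat.clog 2 N) ∧
      ((2 * Nat.clog 2 (Nat.clog 2 N) : ℕ) : ℝ)
        ≤ 100 * Real.log (Real.log N) := by
  set L := Nat.clog 2 N with hL
  set m := Nat.clog 2 L with hm
  have hb : (1:ℕ) < 2 := one_lt_two
  have hL2 : 2 ≤ L := by
    have h : (2:ℕ) ^ 1 < N := by omega
    have := (Nat.lt_clog_iff_pow_lt hb).symm.mp h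
    omega
  have hm1 : 1 ≤ m := by
    have h : (2:ℕ) ^ 0 < L := by omega
    have := (Nat.lt_clog_iff_pow_lt hb).symm.mp h
    omega
  have hNle : N ≤ 2 ^ 2 ^ m := by
    calc N ≤ 2 ^ L := Nat.le_pow_clog hb N
      _ ≤ 2 ^ 2 ^ m := Nat.pow_le_pow_right (by norm_num) (Nat.le_pow_clog hb L)
  refine ⟨hm1, hNle, ?_⟩
  have hN3 : (3:ℝ) ≤ (N:ℝ) := by exact_mod_cast hN
  have hlogN : Real.log 3 ≤ Real.log N := Real.log_le_log (by norm_num) hN3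
  have hlogN1 : (1.09:ℝ) ≤ Real.log N := le_trans log_three_ge' hlogN
  have hloglogN : Real.log (Real.log 3) ≤ Real.log (Real.log N) :=
    Real.log_le_log (by linarith [log_three_ge']) hlogN
  have hll : (0.08:ℝ) ≤ Real.log (Real.log N) := le_trans loglog_three_ge' hloglogN
  by_cases hcase : m ≤ 3
  · have hmr : (m:ℝ) ≤ 3 := by exact_mod_cast hcase
    push_cast
    nlinarith
  · push_neg at hcase
    have hm4 : 4 ≤ m := hcase
    have hLlb : 2 ^ (m - 1) < L := by
      have h : m - 1 < Nat.clog 2 L := by omega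
      exact (Nat.lt_clog_iff_pow_lt hb).symm.mpr h
    have hNlb : 2 ^ 2 ^ (m - 1) < N := by
      have h : 2 ^ (m-1) < Nat.clog 2 N := by omega
      exact (Nat.lt_clog_iff_pow_lt hb).symm.mpr h
    have hNlbR : ((2:ℝ) ^ (2 ^ (m-1) : ℕ)) ≤ (N:ℝ) := by exact_mod_cast hNlb.le
    have hlogNlb : ((2:ℕ) ^ (m-1) : ℝ) * Real.log 2 ≤ Real.log N := by
      calc ((2:ℕ) ^ (m-1) : ℝ) * Real.log 2 = Real.log ((2:ℝ) ^ (2 ^ (m-1) : ℕ)) := by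
            rw [Real.log_pow]; push_cast; ring
        _ ≤ Real.log N := Real.log_le_log (by positivity) hNlbR
    have h2m2 : ((2:ℝ) ^ (m-2 : ℕ)) ≤ Real.log N := by
      have h : ((2:ℕ) ^ (m-1) : ℝ) = 2 * (2:ℝ) ^ (m-2 : ℕ) := by
        push_cast
        rw [← pow_succ']
        congr 1
        omega
      rw [h] at hlogNlb
      nlinarith [log_two_ge']
    have hloglb : ((m:ℝ) - 2) * Real.log 2 ≤ Real.log (Real.log N) := by
      calc ((m:ℝ) - 2) * Real.log 2 = ((m-2 : ℕ) : ℝ) * Real.log 2 := by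
            rw [Nat.cast_sub (by omega)]; norm_num
        _ = Real.log ((2:ℝ) ^ (m - 2 : ℕ)) := by rw [Real.log_pow]
        _ ≤ Real.log (Real.log N) := Real.log_le_log (by positivity) h2m2
    push_cast
    nlinarith [log_two_ge']

lemma setDiam_sq' {M : Type*} [MetricSpace M] (B : Set M) :
    (setDiam (fun x y => ENNReal.ofReal (Real.sqrt (dist x y))) B) ^ 2
      = setDiam (fun x y => ENNReal.ofReal (dist x y)) B := by
  unfold setDiam
  rw [sq_iSup']
  refine iSup_congr fun x => ?_
  rw [sq_iSup']
  refine iSup_congr fun _ => ?_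
  rw [sq_iSup']
  refine iSup_congr fun y => ?_
  rw [sq_iSup']
  refine iSup_congr fun _ => ?_
  rw [← ENNReal.ofReal_pow (Real.sqrt_nonneg _), Real.sq_sqrt dist_nonneg]

lemma term_sq' {M : Type*} [MetricSpace M] (n : ℕ) (B : Set M) :
    ((2 : ℝ≥0∞) ^ ((n : ℝ) / 2) * setDiam (fun x y => ENNReal.ofReal (Real.sqrt (dist x y))) B) ^ 2
      = (2 : ℝ≥0∞) ^ n * setDiam (fun x y => ENNReal.ofReal (dist x y)) B := by
  rw [mul_pow, setDiam_sq']
  congr 1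
  rw [← ENNReal.rpow_natCast ((2:ℝ≥0∞) ^ ((n:ℝ)/2)) 2, ← ENNReal.rpow_mul,
    ← ENNReal.rpow_natCast 2 n]
  norm_num

lemma gamma1_le_sq_gamma2' {M : Type*} [MetricSpace M] (A : Set M) :
    gamma1 (fun x y => ENNReal.ofReal (dist x y)) A
      ≤ (gamma2 (fun x y => ENNReal.ofReal (Real.sqrt (dist x y))) A) ^ 2 := by
  unfold gamma1 gamma2
  rw [sq_iInf']
  refine iInf_mono fun 𝒜 => ?_
  rw [sq_iSup']
  refine iSup_mono fun x => ?_
  rw [sq_iSup']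
  refine iSup_mono fun _ => ?_
  calc ∑' n : ℕ, (2 : ℝ≥0∞) ^ n * setDiam (fun x y => ENNReal.ofReal (dist x y)) (𝒜.cell n x)
      = ∑' n : ℕ, ((2 : ℝ≥0∞) ^ ((n : ℝ) / 2)
          * setDiam (fun x y => ENNReal.ofReal (Real.sqrt (dist x y))) (𝒜.cell n x)) ^ 2 := by
        exact tsum_congr fun n => (term_sq' n _).symm
    _ ≤ _ := tsum_sq_le_sq_tsum' _

/-- Truncation of an admissible sequence: below level `m` keep the original cells,
from level `m` on use singletons. -/
def truncSeq' {M : Type*} [Fintype M] (𝒜 : AdmissibleSeq (Set.univ : Set M)) (m : ℕ)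
    (hm1 : 1 ≤ m) (hcard : Fintype.card M ≤ 2 ^ 2 ^ m) :
    AdmissibleSeq (Set.univ : Set M) where
  cell n x := if n < m then 𝒜.cell n x else {x}
  self_mem n x hx := by
    by_cases h : n < m
    · simpa [h] using 𝒜.self_mem n x hx
    · simp [h]
  cell_subset n x hx := by
    by_cases h : n < m <;> simp [h, Set.subset_univ]
  compatible n x hx y hy := by
    by_cases h : n < m
    · simpa [h] using 𝒜.compatible n x hx y hy
    · simp only [if_neg h]
      rcases eq_or_ne x y with h' | h'
      · exact Or.inl (by rw [h'])
      · exact Or.inr (Set.disjoint_singleton.mpr h')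
  refines n x hx := by
    by_cases h1 : n + 1 < m
    · have h0 : n < m := by omega
      simpa [h1, h0] using 𝒜.refines n x hx
    · by_cases h0 : n < m
      · simp only [if_neg h1, if_pos h0]
        exact Set.singleton_subset_iff.mpr (𝒜.self_mem n x hx)
      · simp [h1, h0]
  finite n := by
    by_cases h : n < m
    · simp only [if_pos h]
      exact 𝒜.finite n
    · simp only [if_neg h]
      refine Set.Finite.subset (Set.finite_range fun x : M => ({x} : Set M)) ?_
      rintro B ⟨x, -, rfl⟩
      exact ⟨x, rfl⟩
  card_le n := by
    by_cases h : n < m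
    · simp only [if_pos h]
      exact 𝒜.card_le n
    · simp only [if_neg h]
      have hsub : {B : Set M | ∃ x ∈ (Set.univ : Set M), B = {x}}
          ⊆ Set.range fun x : M => ({x} : Set M) := by
        rintro B ⟨x, -, rfl⟩; exact ⟨x, rfl⟩
      have h1 : {B : Set M | ∃ x ∈ (Set.univ : Set M), B = {x}}.ncard
          ≤ (Set.range fun x : M => ({x} : Set M)).ncard :=
        Set.ncard_le_ncard hsub (Set.finite_range _)
      have h2 : (Set.range fun x : M => ({x} : Set M)).ncard ≤ Fintype.card M := by
        rw [← Set.image_univ]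
        calc ((fun x : M => ({x} : Set M)) '' Set.univ).ncard
            ≤ (Set.univ : Set M).ncard := Set.ncard_image_le Set.finite_univ
          _ = Fintype.card M := by rw [Set.ncard_univ, Nat.card_eq_fintype_card]
      obtain ⟨k, rfl⟩ : ∃ k, n = k + 1 := ⟨n - 1, by omega⟩
      have h3 : (2:ℕ) ^ 2 ^ m ≤ 2 ^ 2 ^ (k + 1) :=
        Nat.pow_le_pow_right (by norm_num) (Nat.pow_le_pow_right (by norm_num) (by omega))
      calc {B : Set M | ∃ x ∈ (Set.univ : Set M), B = {x}}.ncard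
          ≤ Fintype.card M := le_trans h1 h2
        _ ≤ 2 ^ 2 ^ m := hcard
        _ ≤ Nseq (k + 1) := h3

lemma setDiam_sqrt_singleton' {M : Type*} [MetricSpace M] (x : M) :
    setDiam (fun x y => ENNReal.ofReal (Real.sqrt (dist x y))) ({x} : Set M) = 0 := by
  simp [setDiam]

lemma sq_gamma2_le' {M : Type*} [MetricSpace M] [Fintype M] (m : ℕ)
    (hm1 : 1 ≤ m) (hcard : Fintype.card M ≤ 2 ^ 2 ^ m) :
    (gamma2 (fun x y => ENNReal.ofReal (Real.sqrt (dist x y))) (Set.univ : Set M)) ^ 2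
      ≤ ((2 * m : ℕ) : ℝ≥0∞)
          * gamma1 (fun x y => ENNReal.ofReal (dist x y)) (Set.univ : Set M) := by
  have key : ∀ 𝒜 : AdmissibleSeq (Set.univ : Set M),
      (gamma2 (fun x y => ENNReal.ofReal (Real.sqrt (dist x y))) (Set.univ : Set M)) ^ 2
        ≤ ((2 * m : ℕ) : ℝ≥0∞) * ⨆ x ∈ (Set.univ : Set M),
            ∑' n : ℕ, (2 : ℝ≥0∞) ^ n
              * setDiam (fun x y => ENNReal.ofReal (dist x y)) (𝒜.cell n x) := by
    intro 𝒜
    set 𝒜' := truncSeq' 𝒜 m hm1 hcard with h𝒜'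
    have h1 : gamma2 (fun x y => ENNReal.ofReal (Real.sqrt (dist x y))) (Set.univ : Set M)
        ≤ ⨆ x ∈ (Set.univ : Set M), ∑' n : ℕ, (2 : ℝ≥0∞) ^ ((n : ℝ) / 2)
            * setDiam (fun x y => ENNReal.ofReal (Real.sqrt (dist x y))) (𝒜'.cell n x) :=
      iInf_le _ 𝒜'
    refine le_trans (pow_le_pow_left' h1 2) ?_
    rw [sq_iSup']
    refine iSup_le fun x => ?_
    rw [sq_iSup']
    refine iSup_le fun _ => ?_
    -- now bound the single-x square
    have hzero : ∀ n ∉ Finset.range m, (2 : ℝ≥0∞) ^ ((n : ℝ) / 2)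
        * setDiam (fun x y => ENNReal.ofReal (Real.sqrt (dist x y))) (𝒜'.cell n x) = 0 := by
      intro n hn
      have hnm : ¬ n < m := by simpa using hn
      have hc : 𝒜'.cell n x = {x} := by simp [h𝒜', truncSeq', hnm]
      rw [hc, setDiam_sqrt_singleton', mul_zero]
    rw [tsum_eq_sum hzero]
    refine le_trans (sq_sum_le' _ _) ?_
    rw [Finset.card_range]
    have heq : ∀ n ∈ Finset.range m,
        ((2 : ℝ≥0∞) ^ ((n : ℝ) / 2)
          * setDiam (fun x y => ENNReal.ofReal (Real.sqrt (dist x y))) (𝒜'.cell n x)) ^ 2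
        = (2 : ℝ≥0∞) ^ n * setDiam (fun x y => ENNReal.ofReal (dist x y)) (𝒜.cell n x) := by
      intro n hn
      have hnm : n < m := Finset.mem_range.mp hn
      have hc : 𝒜'.cell n x = 𝒜.cell n x := by simp [h𝒜', truncSeq', hnm]
      rw [hc, term_sq']
    rw [Finset.sum_congr rfl heq]
    have h2 : ∑ n ∈ Finset.range m,
        (2 : ℝ≥0∞) ^ n * setDiam (fun x y => ENNReal.ofReal (dist x y)) (𝒜.cell n x)
        ≤ ∑' n : ℕ, (2 : ℝ≥0∞) ^ n
            * setDiam (fun x y => ENNReal.ofReal (dist x y)) (𝒜.cell n x) :=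
      ENNReal.sum_le_tsum _
    have h3 : ∑' n : ℕ, (2 : ℝ≥0∞) ^ n
          * setDiam (fun x y => ENNReal.ofReal (dist x y)) (𝒜.cell n x)
        ≤ ⨆ y ∈ (Set.univ : Set M), ∑' n : ℕ, (2 : ℝ≥0∞) ^ n
            * setDiam (fun x y => ENNReal.ofReal (dist x y)) (𝒜.cell n y) :=
      le_iSup_of_le x (le_iSup_of_le (Set.mem_univ x) le_rfl)
    calc 2 * (m : ℝ≥0∞) * ∑ n ∈ Finset.range m,
          (2 : ℝ≥0∞) ^ n * setDiam (fun x y => ENNReal.ofReal (dist x y)) (𝒜.cell n x)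
        ≤ 2 * (m : ℝ≥0∞) * ⨆ y ∈ (Set.univ : Set M), ∑' n : ℕ, (2 : ℝ≥0∞) ^ n
            * setDiam (fun x y => ENNReal.ofReal (dist x y)) (𝒜.cell n y) :=
          mul_le_mul_right (le_trans h2 h3) _
      _ = ((2 * m : ℕ) : ℝ≥0∞) * ⨆ y ∈ (Set.univ : Set M), ∑' n : ℕ, (2 : ℝ≥0∞) ^ n
            * setDiam (fun x y => ENNReal.ofReal (dist x y)) (𝒜.cell n y) := by
          push_cast; ring_nf
  have := le_iInf key
  refine le_trans this ?_
  rw [← ENNReal.mul_iInf' (by intro h; exact absurd h (ENNReal.natCast_ne_top _))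
    (by intro h; norm_cast at h; omega)]
  exact le_rfl

end Statement19Aux

/-- There is a universal constant `C` such that for every finite metric
space `(M, d)` with `|M| ≥ 3`,
`γ₁(M, d) ≤ [γ₂(M, √d)]² ≤ C log(log |M|) γ₁(M, d)`. -/
theorem gamma1_gamma2_comparison :
    ∃ C : ℝ≥0, ∀ (M : Type) [MetricSpace M] [Fintype M],
      3 ≤ Fintype.card M →
      gamma1 (fun x y => ENNReal.ofReal (dist x y)) (Set.univ : Set M)
          ≤ (gamma2 (fun x y => ENNReal.ofReal (Real.sqrt (dist x y)))
              (Set.univ : Set M)) ^ 2 ∧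
      (gamma2 (fun x y => ENNReal.ofReal (Real.sqrt (dist x y)))
          (Set.univ : Set M)) ^ 2
        ≤ (C : ℝ≥0∞) * ENNReal.ofReal (Real.log (Real.log (Fintype.card M)))
            * gamma1 (fun x y => ENNReal.ofReal (dist x y)) (Set.univ : Set M) := by
  refine ⟨100, fun M _ _ hcard => ?_⟩
  refine ⟨gamma1_le_sq_gamma2' _, ?_⟩
  obtain ⟨hm1, hNle, hreal⟩ := numeric_m_bound' (Fintype.card M) hcard
  refine le_trans (sq_gamma2_le' _ hm1 hNle) ?_
  apply mul_le_mul_left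
  have h1 : ((2 * Nat.clog 2 (Nat.clog 2 (Fintype.card M)) : ℕ) : ℝ≥0∞)
      = ENNReal.ofReal ((2 * Nat.clog 2 (Nat.clog 2 (Fintype.card M)) : ℕ) : ℝ) :=
    (ENNReal.ofReal_natCast _).symm
  rw [h1]
  calc ENNReal.ofReal ((2 * Nat.clog 2 (Nat.clog 2 (Fintype.card M)) : ℕ) : ℝ)
      ≤ ENNReal.ofReal (100 * Real.log (Real.log (Fintype.card M))) :=
        ENNReal.ofReal_le_ofReal hreal
    _ = ENNReal.ofReal 100 * ENNReal.ofReal (Real.log (Real.log (Fintype.card M))) :=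
        ENNReal.ofReal_mul (by norm_num)
    _ = ((100 : ℝ≥0) : ℝ≥0∞) * ENNReal.ofReal (Real.log (Real.log (Fintype.card M))) := by
        norm_num

end

end CoverTime
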